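/- arXiv:math/0703807 — 3 statements merged into one kernel-verified Lean document; each statement's English description precedes it below -/
import Mathlib

section
/- For every bounded set A ⊆ ℝ^{n-1} (n ≥ 2) and every R > 0, the tube-measure of A × [−R, R] ⊆ ℝⁿ satisfies μ(A × [−R, R]) ≥ 2R·|A| / (2R + diam(A)), where |A| is the (n−1)-dimensional Lebesgue outer measure of A. -/
open MeasureTheory Metric Set

noncomputable def unitBallVolume (k : ℕ) : ENNReal :=
  volume (Metric.closedBall (0 : EuclideanSpace ℝ (Fin k)) 1)

def IsTube {n : ℕ} (T : Set (EuclideanSpace ℝ (Fin n))) (r : ℝ) : Prop :=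
  0 < r ∧ ∃ p v : EuclideanSpace ℝ (Fin n), v ≠ 0 ∧
    T = Metric.cthickening r {x | ∃ t : ℝ, x = p + t • v}

noncomputable def tubeMeasure (n : ℕ) (E : Set (EuclideanSpace ℝ (Fin n))) : ENNReal :=
  ⨅ (T : ℕ → Set (EuclideanSpace ℝ (Fin n))) (r : ℕ → ℝ)
    (_ : ∀ i, IsTube (T i) (r i)) (_ : E ⊆ ⋃ i, T i),
    ∑' i, unitBallVolume (n - 1) * ENNReal.ofReal (r i ^ (n - 1))


/-- Identification of `ℝ^m × ℝ` with `ℝ^(m+1)`: the set `A × [-R, R]`. -/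
def prodWithIcc {m : ℕ} (A : Set (EuclideanSpace ℝ (Fin m))) (R : ℝ) :
    Set (EuclideanSpace ℝ (Fin (m + 1))) :=
  {x | (WithLp.toLp 2 (fun i : Fin m => x i.castSucc) : EuclideanSpace ℝ (Fin m)) ∈ A ∧
    x (Fin.last m) ∈ Set.Icc (-R) R}

/-! ### Auxiliary lemmas -/

/-- Projection dropping the last coordinate. -/
def projE {m : ℕ} (x : EuclideanSpace ℝ (Fin (m + 1))) : EuclideanSpace ℝ (Fin m) :=
  WithLp.toLp 2 (fun i : Fin m => x i.castSucc)

lemma sqrt_add_le (a b : ℝ) (ha : 0 ≤ a) (hb : 0 ≤ b) :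
    Real.sqrt (a + b) ≤ Real.sqrt a + Real.sqrt b := by
  rw [show a + b = a + b from rfl]
  have h : a + b ≤ (Real.sqrt a + Real.sqrt b) ^ 2 := by
    have := Real.sqrt_nonneg a
    have := Real.sqrt_nonneg b
    nlinarith [Real.sq_sqrt ha, Real.sq_sqrt hb, mul_nonneg (Real.sqrt_nonneg a) (Real.sqrt_nonneg b)]
  calc Real.sqrt (a + b) ≤ Real.sqrt ((Real.sqrt a + Real.sqrt b) ^ 2) := Real.sqrt_le_sqrt h
  _ = Real.sqrt a + Real.sqrt b := Real.sqrt_sq (by positivity)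

lemma dist_projE_le {m : ℕ} (x y : EuclideanSpace ℝ (Fin (m + 1))) :
    dist (projE x) (projE y) ≤ dist x y := by
  rw [EuclideanSpace.dist_eq, EuclideanSpace.dist_eq]
  apply Real.sqrt_le_sqrt
  rw [Fin.sum_univ_castSucc (f := fun i : Fin (m+1) => dist (x i) (y i) ^ 2)]
  have h0 : (0:ℝ) ≤ dist (x (Fin.last m)) (y (Fin.last m)) ^ 2 := sq_nonneg _
  have he : ∑ i : Fin m, dist (projE x i) (projE y i) ^ 2
      = ∑ i : Fin m, dist (x i.castSucc) (y i.castSucc) ^ 2 := rfl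
  rw [he]
  linarith

lemma dist_last_le {m : ℕ} (x y : EuclideanSpace ℝ (Fin (m + 1))) :
    dist (x (Fin.last m)) (y (Fin.last m)) ≤ dist x y := by
  rw [EuclideanSpace.dist_eq]
  have h : dist (x (Fin.last m)) (y (Fin.last m)) =
      Real.sqrt (dist (x (Fin.last m)) (y (Fin.last m)) ^ 2) :=
    (Real.sqrt_sq dist_nonneg).symm
  rw [h]
  apply Real.sqrt_le_sqrt
  rw [Fin.sum_univ_castSucc (f := fun i : Fin (m+1) => dist (x i) (y i) ^ 2)]
  have : (0:ℝ) ≤ ∑ i : Fin m, dist (x i.castSucc) (y i.castSucc) ^ 2 :=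
    Finset.sum_nonneg fun _ _ => sq_nonneg _
  linarith

lemma dist_le_projE_add_last {m : ℕ} (x y : EuclideanSpace ℝ (Fin (m + 1))) :
    dist x y ≤ dist (projE x) (projE y) + dist (x (Fin.last m)) (y (Fin.last m)) := by
  have h1 : dist (projE x) (projE y)
      = Real.sqrt (∑ i : Fin m, dist (x i.castSucc) (y i.castSucc) ^ 2) :=
    EuclideanSpace.dist_eq (projE x) (projE y)
  calc dist x y = Real.sqrt ((∑ i : Fin m, dist (x i.castSucc) (y i.castSucc) ^ 2) +
        dist (x (Fin.last m)) (y (Fin.last m)) ^ 2) := by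
        rw [EuclideanSpace.dist_eq,
          Fin.sum_univ_castSucc (f := fun i : Fin (m+1) => dist (x i) (y i) ^ 2)]
  _ ≤ Real.sqrt (∑ i : Fin m, dist (x i.castSucc) (y i.castSucc) ^ 2) +
        Real.sqrt (dist (x (Fin.last m)) (y (Fin.last m)) ^ 2) :=
        sqrt_add_le _ _ (Finset.sum_nonneg fun _ _ => sq_nonneg _) (sq_nonneg _)
  _ = dist (projE x) (projE y) + dist (x (Fin.last m)) (y (Fin.last m)) := by
      rw [← h1, Real.sqrt_sq dist_nonneg]

/-- Volume of a "product" set in `ℝ^{m+1}`. -/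
lemma volume_projE_prod {m : ℕ} (B : Set (EuclideanSpace ℝ (Fin m))) (I : Set ℝ) :
    volume {x : EuclideanSpace ℝ (Fin (m + 1)) | projE x ∈ B ∧ x (Fin.last m) ∈ I} =
      volume B * volume I := by
  let e1 := (MeasurableEquiv.toLp 2 (Fin (m + 1) → ℝ)).symm
  let e2 := MeasurableEquiv.piFinSuccAbove (fun _ : Fin (m + 1) => ℝ) (Fin.last m)
  let e3 := MeasurableEquiv.prodCongr (MeasurableEquiv.refl ℝ)
    (MeasurableEquiv.toLp 2 (Fin m → ℝ))
  let e := (e1.trans e2).trans e3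
  have hmp : MeasurePreserving e volume volume := by
    have h1 := EuclideanSpace.volume_preserving_symm_measurableEquiv_toLp (Fin (m+1))
    have h2 := volume_preserving_piFinSuccAbove (fun _ : Fin (m + 1) => ℝ) (Fin.last m)
    have h3 := (MeasurePreserving.id (volume : Measure ℝ)).prod
      ((EuclideanSpace.volume_preserving_symm_measurableEquiv_toLp (Fin m)).symm)
    exact (h3.comp (h2.comp h1))
  have he : ∀ x : EuclideanSpace ℝ (Fin (m + 1)),
      e x = (x (Fin.last m), projE x) := by
    intro x
    have h1 : e x = (x (Fin.last m), WithLp.toLp 2 (fun j : Fin m => x ((Fin.last m).succAbove j))) := rfl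
    rw [h1]
    congr 1
    unfold projE
    congr 1
    funext j
    rw [Fin.succAbove_last]
  have hset : {x : EuclideanSpace ℝ (Fin (m + 1)) | projE x ∈ B ∧ x (Fin.last m) ∈ I} =
      e ⁻¹' (I ×ˢ B) := by
    ext x
    simp only [Set.mem_setOf_eq, Set.mem_preimage, he x, Set.mem_prod]
    exact ⟨fun h => ⟨h.2, h.1⟩, fun h => ⟨h.2, h.1⟩⟩
  rw [hset]
  have h2 : volume (e ⁻¹' (I ×ˢ B)) = volume (I ×ˢ B) := by
    rw [← hmp.map_eq, MeasurableEquiv.map_apply]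
  rw [h2, Measure.volume_eq_prod, Measure.prod_prod, mul_comm]

/-- Measure of a preimage under a measure-preserving measurable equivalence (arbitrary sets). -/
lemma measure_preimage_equiv {α β : Type*} [MeasurableSpace α] [MeasurableSpace β]
    {μ : Measure α} {ν : Measure β} (e : α ≃ᵐ β) (h : MeasurePreserving e μ ν)
    (s : Set β) : μ (e ⁻¹' s) = ν s := by
  rw [← h.map_eq, MeasurableEquiv.map_apply]

/-- Key estimate: volume of a tube intersected with a set of diameter at most `D`. -/
lemma volume_tube_inter_le {m : ℕ} {T : Set (EuclideanSpace ℝ (Fin (m + 1)))} {r : ℝ}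
    (hT : IsTube T r) {S : Set (EuclideanSpace ℝ (Fin (m + 1)))} {D : ℝ}
    (hS : ∀ x ∈ S, ∀ y ∈ S, dist x y ≤ D) :
    volume (T ∩ S) ≤ unitBallVolume m * ENNReal.ofReal (r ^ m) * ENNReal.ofReal D := by
  obtain ⟨hr, p, v, hv, rfl⟩ := hT
  set L : Set (EuclideanSpace ℝ (Fin (m + 1))) := {x | ∃ t : ℝ, x = p + t • v} with hL
  rcases Set.eq_empty_or_nonempty (cthickening r L ∩ S) with h | ⟨x₀, hx₀⟩
  · simp [h]
  -- a unit vector in the direction of the tube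
  set u : EuclideanSpace ℝ (Fin (m + 1)) := ‖v‖⁻¹ • v with hu_def
  have hu : ‖u‖ = 1 := norm_smul_inv_norm hv
  -- an orthonormal basis whose last vector is `u`
  have hcard : Module.finrank ℝ (EuclideanSpace ℝ (Fin (m + 1))) = Fintype.card (Fin (m + 1)) := by
    simp [finrank_euclideanSpace_fin]
  have horth : Orthonormal ℝ (({Fin.last m} : Set (Fin (m + 1))).restrict
      (fun _ : Fin (m + 1) => u)) := by
    constructor
    · intro i; exact hu
    · intro i j hij
      exact absurd (Subtype.ext ((Set.mem_singleton_iff.1 i.2).trans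
        (Set.mem_singleton_iff.1 j.2).symm)) hij
  obtain ⟨b, hb⟩ := horth.exists_orthonormalBasis_extension_of_card_eq hcard
  have hbu : b (Fin.last m) = u := hb _ (Set.mem_singleton _)
  set f := b.repr with hf
  have hmp : MeasurePreserving f volume volume := b.measurePreserving_repr
  have hfu : f u = EuclideanSpace.single (Fin.last m) (1 : ℝ) := by
    rw [← hbu]; exact b.repr_self _
  have hfv : f v = ‖v‖ • EuclideanSpace.single (Fin.last m) (1 : ℝ) := by
    have hv' : v = ‖v‖ • u := by
      rw [hu_def, smul_inv_smul₀ (norm_ne_zero_iff.2 hv)]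
    conv_lhs => rw [hv']
    rw [f.map_smul, hfu]
  -- along the line, the first m coordinates of f are constant
  have key : ∀ y ∈ L, ∀ j : Fin m, f y j.castSucc = f p j.castSucc := by
    rintro y ⟨t, rfl⟩ j
    rw [map_add, f.map_smul, hfv]
    have : EuclideanSpace.single (Fin.last m) (1 : ℝ) j.castSucc = 0 := by
      rw [EuclideanSpace.single_apply, if_neg (Fin.castSucc_lt_last j).ne]
    have hne : j.castSucc ≠ Fin.last m := (Fin.castSucc_lt_last j).ne
    simp [this, hne]
  have hpL : p ∈ L := ⟨0, by simp⟩
  -- projection of the tube is inside the ball of radius r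
  have hproj : ∀ x ∈ cthickening r L, dist (projE (f x)) (projE (f p)) ≤ r := by
    intro x hx
    rw [← edist_le_ofReal hr.le]
    rw [mem_cthickening_iff] at hx
    refine le_trans ?_ hx
    rw [EMetric.le_infEdist]
    intro y hy
    have h1 : projE (f y) = projE (f p) := congrArg (WithLp.toLp 2) (funext fun j => key y hy j)
    calc edist (projE (f x)) (projE (f p)) = edist (projE (f x)) (projE (f y)) := by rw [h1]
    _ ≤ edist (f x) (f y) := by
        rw [edist_dist, edist_dist]; exact ENNReal.ofReal_le_ofReal (dist_projE_le _ _)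
    _ = edist x y := f.isometry.edist_eq x y
  -- the last coordinates lie in an interval of length D
  have hD : 0 ≤ D := le_trans dist_nonneg (hS x₀ hx₀.2 x₀ hx₀.2)
  set J : Set ℝ := (fun y => f y (Fin.last m)) '' (cthickening r L ∩ S) with hJ
  have hJne : J.Nonempty := ⟨_, x₀, hx₀, rfl⟩
  have hdistJ : ∀ x ∈ cthickening r L ∩ S, ∀ z ∈ J, x ∈ S → |f x (Fin.last m) - z| ≤ D := by
    rintro x hx z ⟨y, hy, rfl⟩ hxS
    calc |f x (Fin.last m) - f y (Fin.last m)| = dist (f x (Fin.last m)) (f y (Fin.last m)) :=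
          (Real.dist_eq _ _).symm
    _ ≤ dist (f x) (f y) := dist_last_le _ _
    _ = dist x y := f.isometry.dist_eq x y
    _ ≤ D := hS x hxS y hy.2
  have hbdd : BddBelow J := by
    refine ⟨f x₀ (Fin.last m) - D, ?_⟩
    rintro z hz
    have := hdistJ x₀ hx₀ z hz hx₀.2
    have := abs_le.1 this
    linarith [this.2]
  set a := sInf J with ha
  have hIcc : ∀ x ∈ cthickening r L ∩ S, f x (Fin.last m) ∈ Set.Icc a (a + D) := by
    intro x hx
    constructor
    · exact csInf_le hbdd ⟨x, hx, rfl⟩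
    · have : f x (Fin.last m) - D ≤ a := by
        refine le_csInf hJne ?_
        intro z hz
        have := abs_le.1 (hdistJ x hx z hz hx.2)
        linarith [this.1]
      linarith
  -- the cylinder
  set C : Set (EuclideanSpace ℝ (Fin (m + 1))) :=
    {w | projE w ∈ closedBall (projE (f p)) r ∧ w (Fin.last m) ∈ Set.Icc a (a + D)} with hC
  have hsub : cthickening r L ∩ S ⊆ ⇑f ⁻¹' C := by
    intro x hx
    exact ⟨hproj x hx.1, hIcc x hx⟩
  have hvolC : volume C = unitBallVolume m * ENNReal.ofReal (r ^ m) * ENNReal.ofReal D := by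
    rw [hC, volume_projE_prod, Real.volume_Icc, add_sub_cancel_left,
      Measure.addHaar_closedBall' _ _ hr.le, finrank_euclideanSpace_fin]
    unfold unitBallVolume
    ring
  calc volume (cthickening r L ∩ S) ≤ volume (⇑f ⁻¹' C) := measure_mono hsub
  _ = volume C :=
      measure_preimage_equiv f.toHomeomorph.toMeasurableEquiv hmp C
  _ = _ := hvolC

/-- For bounded `A ⊆ ℝ^{n-1}` and `R > 0`,
`μ(A × [-R, R]) ≥ 2R·|A| / (2R + diam A)`. -/
theorem tubeMeasure_prod_Icc_ge (m : ℕ) (hm : 1 ≤ m)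
    (A : Set (EuclideanSpace ℝ (Fin m))) (hA : Bornology.IsBounded A)
    (R : ℝ) (hR : 0 < R) :
    ENNReal.ofReal (2 * R) * volume A / ENNReal.ofReal (2 * R + Metric.diam A) ≤
      tubeMeasure (m + 1) (prodWithIcc A R) := by
  set S := prodWithIcc A R with hSdef
  set D : ℝ := 2 * R + Metric.diam A with hDdef
  have hD : 0 ≤ D := by positivity
  -- diameter bound on S
  have hSdist : ∀ x ∈ S, ∀ y ∈ S, dist x y ≤ D := by
    intro x hx y hy
    have h1 : dist (projE x) (projE y) ≤ Metric.diam A :=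
      dist_le_diam_of_mem hA hx.1 hy.1
    have h2 : dist (x (Fin.last m)) (y (Fin.last m)) ≤ 2 * R := by
      have := Real.dist_le_of_mem_Icc hx.2 hy.2
      linarith
    calc dist x y ≤ dist (projE x) (projE y) + dist (x (Fin.last m)) (y (Fin.last m)) :=
          dist_le_projE_add_last x y
    _ ≤ Metric.diam A + 2 * R := add_le_add h1 h2
    _ = D := by rw [hDdef]; ring
  rw [tubeMeasure]
  refine le_iInf fun T => le_iInf fun r => le_iInf fun hT => le_iInf fun hcov => ?_
  refine ENNReal.div_le_of_le_mul ?_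
  have hmain : ENNReal.ofReal (2 * R) * volume A ≤
      (∑' i, unitBallVolume m * ENNReal.ofReal (r i ^ m)) * ENNReal.ofReal D := by
    have hvolS : volume S = volume A * ENNReal.ofReal (2 * R) := by
      have : S = {x : EuclideanSpace ℝ (Fin (m + 1)) | projE x ∈ A ∧
          x (Fin.last m) ∈ Set.Icc (-R) R} := rfl
      rw [this, volume_projE_prod, Real.volume_Icc]
      congr 1
      rw [sub_neg_eq_add]; ring_nf
    calc ENNReal.ofReal (2 * R) * volume A = volume S := by rw [hvolS, mul_comm]
    _ ≤ volume (⋃ i, T i ∩ S) := by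
        refine measure_mono fun x hx => ?_
        obtain ⟨i, hi⟩ := Set.mem_iUnion.1 (hcov hx)
        exact Set.mem_iUnion.2 ⟨i, hi, hx⟩
    _ ≤ ∑' i, volume (T i ∩ S) := measure_iUnion_le _
    _ ≤ ∑' i, unitBallVolume m * ENNReal.ofReal (r i ^ m) * ENNReal.ofReal D :=
        ENNReal.tsum_le_tsum fun i => volume_tube_inter_le (hT i) hSdist
    _ = (∑' i, unitBallVolume m * ENNReal.ofReal (r i ^ m)) * ENNReal.ofReal D :=
        ENNReal.tsum_mul_right
  simpa using hmain
end

section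
/- For every single tube T ⊆ ℝⁿ (n ≥ 2) of cross-sectional radius r > 0, the tube-measure of T is exactly its cross-sectional volume: μ(T) = γ_{n-1} · r^{n-1}. -/
open MeasureTheory Metric Set

noncomputable def tubeTail (m : ℕ) (x : EuclideanSpace ℝ (Fin (m+1))) :
    EuclideanSpace ℝ (Fin m) := WithLp.toLp 2 (fun j => x j.succ)

lemma tubeΦ_mp (m : ℕ) :
    MeasurePreserving (fun x : EuclideanSpace ℝ (Fin (m+1)) => (x 0, tubeTail m x))
      volume volume := by
  have h1 := PiLp.volume_preserving_ofLp (Fin (m+1))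
  have h2 := MeasureTheory.volume_preserving_piFinSuccAbove (fun _ : Fin (m+1) => ℝ) 0
  have h3 := PiLp.volume_preserving_toLp (Fin m)
  have h4 := (MeasurePreserving.id (volume : Measure ℝ)).prod h3
  have := ((h4.comp h2).comp h1)
  have hf : (fun x : EuclideanSpace ℝ (Fin (m+1)) => (x 0, tubeTail m x))
      = ((Prod.map id (WithLp.toLp 2) ∘ ⇑(MeasurableEquiv.piFinSuccAbove (fun _ : Fin (m+1) => ℝ) 0)) ∘ WithLp.ofLp) := by
    funext x
    simp [tubeTail, MeasurableEquiv.piFinSuccAbove_apply, Fin.insertNthEquiv]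
    rfl
  rw [hf]
  exact this

lemma cylinder_volume (m : ℕ) {s : Set ℝ} {t : Set (EuclideanSpace ℝ (Fin m))}
    (hs : MeasurableSet s) (ht : MeasurableSet t) :
    volume {x : EuclideanSpace ℝ (Fin (m+1)) | x 0 ∈ s ∧ tubeTail m x ∈ t}
      = volume s * volume t := by
  have h := (tubeΦ_mp m).measure_preimage (f := fun x : EuclideanSpace ℝ (Fin (m+1)) => (x 0, tubeTail m x)) ((hs.prod ht).nullMeasurableSet)
  have : {x : EuclideanSpace ℝ (Fin (m+1)) | x 0 ∈ s ∧ tubeTail m x ∈ t}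
      = (fun x : EuclideanSpace ℝ (Fin (m+1)) => (x 0, tubeTail m x)) ⁻¹' (s ×ˢ t) := rfl
  rw [this, h]; exact Measure.prod_prod (μ := (volume : Measure ℝ)) (ν := (volume : Measure (EuclideanSpace ℝ (Fin m)))) s t

lemma norm_sq_decomp (m : ℕ) (x : EuclideanSpace ℝ (Fin (m+1))) :
    ‖x‖^2 = (x 0)^2 + ‖tubeTail m x‖^2 := by
  rw [EuclideanSpace.norm_eq, EuclideanSpace.norm_eq,
    Real.sq_sqrt (by positivity), Real.sq_sqrt (by positivity), Fin.sum_univ_succ]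
  simp [tubeTail, Real.norm_eq_abs, sq_abs]

lemma tubeTail_sub_smul (m : ℕ) (x : EuclideanSpace ℝ (Fin (m+1))) (t : ℝ) :
    tubeTail m (x - t • (EuclideanSpace.single 0 1 : EuclideanSpace ℝ (Fin (m+1))))
      = tubeTail m x := by
  ext j
  simp [tubeTail, EuclideanSpace.single_apply, Fin.succ_ne_zero]

lemma norm_tail_le (m : ℕ) (x : EuclideanSpace ℝ (Fin (m+1))) (t : ℝ) :
    ‖tubeTail m x‖ ≤ ‖x - t • (EuclideanSpace.single 0 1 : EuclideanSpace ℝ (Fin (m+1)))‖ := by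
  have h := norm_sq_decomp m (x - t • (EuclideanSpace.single 0 1 : EuclideanSpace ℝ (Fin (m+1))))
  rw [tubeTail_sub_smul] at h
  nlinarith [norm_nonneg (x - t • (EuclideanSpace.single 0 1 : EuclideanSpace ℝ (Fin (m+1)))),
    norm_nonneg (tubeTail m x), sq_nonneg ((x - t • (EuclideanSpace.single 0 1 : EuclideanSpace ℝ (Fin (m+1)))) 0)]

lemma norm_sub_proj (m : ℕ) (x : EuclideanSpace ℝ (Fin (m+1))) :
    ‖x - x 0 • (EuclideanSpace.single 0 1 : EuclideanSpace ℝ (Fin (m+1)))‖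
      = ‖tubeTail m x‖ := by
  have h := norm_sq_decomp m (x - x 0 • (EuclideanSpace.single 0 1 : EuclideanSpace ℝ (Fin (m+1))))
  rw [tubeTail_sub_smul] at h
  have h0 : (x - x 0 • (EuclideanSpace.single 0 1 : EuclideanSpace ℝ (Fin (m+1)))) 0 = 0 := by
    simp [EuclideanSpace.single_apply]
  rw [h0] at h
  nlinarith [norm_nonneg (x - x 0 • (EuclideanSpace.single 0 1 : EuclideanSpace ℝ (Fin (m+1)))),
    norm_nonneg (tubeTail m x)]

lemma mem_stdTube_iff (m : ℕ) (ρ : ℝ) (hρ : 0 ≤ ρ) (x : EuclideanSpace ℝ (Fin (m+1))) :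
    x ∈ cthickening ρ {y : EuclideanSpace ℝ (Fin (m+1)) |
        ∃ t : ℝ, y = t • (EuclideanSpace.single 0 1 : EuclideanSpace ℝ (Fin (m+1)))}
      ↔ ‖tubeTail m x‖ ≤ ρ := by
  rw [Metric.mem_cthickening_iff]
  constructor
  · intro hx
    have hlow : ENNReal.ofReal ‖tubeTail m x‖ ≤ Metric.infEDist x {y : EuclideanSpace ℝ (Fin (m+1)) |
        ∃ t : ℝ, y = t • (EuclideanSpace.single 0 1 : EuclideanSpace ℝ (Fin (m+1)))} := by
      rw [Metric.le_infEDist]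
      rintro y ⟨t, rfl⟩
      rw [edist_dist, dist_eq_norm]
      exact ENNReal.ofReal_le_ofReal (norm_tail_le m x t)
    have := hlow.trans hx
    rwa [ENNReal.ofReal_le_ofReal_iff hρ] at this
  · intro hx
    refine le_trans (EMetric.infEdist_le_edist_of_mem ⟨x 0, rfl⟩) ?_
    rw [edist_dist, dist_eq_norm]
    exact ENNReal.ofReal_le_ofReal ((norm_sub_proj m x).le.trans hx)

lemma tube_decomp (m : ℕ) (T : Set (EuclideanSpace ℝ (Fin (m+1)))) (ρ : ℝ)
    (hT : IsTube T ρ) :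
    ∃ (F : EuclideanSpace ℝ (Fin (m+1)) → EuclideanSpace ℝ (Fin (m+1)))
      (p : EuclideanSpace ℝ (Fin (m+1))),
      MeasurePreserving F volume volume ∧
      F ⁻¹' T = {x | ‖tubeTail m x‖ ≤ ρ} ∧
      (∀ c R, ∃ c', F ⁻¹' Metric.closedBall c R = Metric.closedBall c' R) ∧
      (∀ R, F ⁻¹' Metric.closedBall p R = Metric.closedBall 0 R) := by
  obtain ⟨hρ, p, v, hv, rfl⟩ := hT
  set u : EuclideanSpace ℝ (Fin (m+1)) := ‖v‖⁻¹ • v with hu_def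
  have hvnorm : ‖v‖ ≠ 0 := norm_ne_zero_iff.2 hv
  have hu : ‖u‖ = 1 := by
    rw [hu_def, norm_smul, norm_inv, norm_norm, inv_mul_cancel₀ hvnorm]
  have hcard : Module.finrank ℝ (EuclideanSpace ℝ (Fin (m+1))) = Fintype.card (Fin (m+1)) := by
    simp [finrank_euclideanSpace_fin]
  have horth : Orthonormal ℝ (({0} : Set (Fin (m+1))).restrict
      (fun _ : Fin (m+1) => u)) := by
    constructor
    · intro i; exact hu
    · intro i j hij
      exact absurd (Subtype.ext (by rw [(mem_singleton_iff.1 i.2), (mem_singleton_iff.1 j.2)])) hij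
  obtain ⟨b, hb⟩ := horth.exists_orthonormalBasis_extension_of_card_eq hcard
  have hb0 : b 0 = u := hb 0 rfl
  set L := b.repr.symm with hL
  set F : EuclideanSpace ℝ (Fin (m+1)) → EuclideanSpace ℝ (Fin (m+1)) :=
    fun y => p + L y with hF
  have hLe0 : L (EuclideanSpace.single 0 1) = u := by
    rw [hL, b.repr_symm_single, hb0]
  have hFiso : Isometry F := by
    apply Isometry.of_dist_eq
    intro a c
    rw [hF]
    simp only
    rw [dist_add_left, L.dist_map]
  -- the axis is the image of the standard line
  have haxis : {x : EuclideanSpace ℝ (Fin (m+1)) | ∃ t : ℝ, x = p + t • v}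
      = F '' {y | ∃ t : ℝ, y = t • (EuclideanSpace.single 0 1 : EuclideanSpace ℝ (Fin (m+1)))} := by
    ext x
    constructor
    · rintro ⟨t, rfl⟩
      refine ⟨(t * ‖v‖) • (EuclideanSpace.single 0 1), ⟨t * ‖v‖, rfl⟩, ?_⟩
      rw [hF]
      simp only
      rw [L.map_smul, hLe0, hu_def, smul_smul, mul_assoc, mul_inv_cancel₀ hvnorm, mul_one]
    · rintro ⟨y, ⟨s, rfl⟩, rfl⟩
      refine ⟨s * ‖v‖⁻¹, ?_⟩
      rw [hF]
      simp only
      rw [L.map_smul, hLe0, hu_def, smul_smul]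
  refine ⟨F, p, ?_, ?_, ?_, ?_⟩
  · exact (measurePreserving_add_left volume p).comp L.measurePreserving
  · ext y
    simp only [mem_preimage, mem_setOf_eq]
    rw [haxis, Metric.mem_cthickening_iff, EMetric.infEdist_image hFiso,
      ← Metric.mem_cthickening_iff, mem_stdTube_iff m ρ hρ.le]
  · intro c R
    refine ⟨L.symm (c - p), ?_⟩
    ext y
    simp only [mem_preimage, Metric.mem_closedBall, dist_eq_norm, hF]
    have : p + L y - c = L (y - L.symm (c - p)) := by
      rw [map_sub, L.apply_symm_apply]; abel
    rw [show p + L y - c = L (y - L.symm (c - p)) from this, L.norm_map]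
  · intro R
    ext y
    simp only [mem_preimage, Metric.mem_closedBall, dist_eq_norm, hF]
    have : p + L y - p = L y := by abel
    rw [this, L.norm_map, sub_zero]

lemma stdTube_eq (m : ℕ) (ρ : ℝ) :
    {x : EuclideanSpace ℝ (Fin (m+1)) | ‖tubeTail m x‖ ≤ ρ}
      = {x : EuclideanSpace ℝ (Fin (m+1)) | tubeTail m x ∈ Metric.closedBall 0 ρ} := by
  ext x; simp [Metric.mem_closedBall]

lemma volume_closedBall_Em (m : ℕ) (ρ : ℝ) (hρ : 0 ≤ ρ) :
    volume (Metric.closedBall (0 : EuclideanSpace ℝ (Fin m)) ρ)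
      = ENNReal.ofReal (ρ ^ m) *
        volume (Metric.closedBall (0 : EuclideanSpace ℝ (Fin m)) 1) := by
  rw [Measure.addHaar_closedBall' volume 0 hρ, finrank_euclideanSpace_fin]

lemma tube_inter_ball_le (m : ℕ) (T : Set (EuclideanSpace ℝ (Fin (m+1)))) (ρ : ℝ)
    (hT : IsTube T ρ) (c : EuclideanSpace ℝ (Fin (m+1))) (R : ℝ) (hR : 0 ≤ R) :
    volume (T ∩ Metric.closedBall c R)
      ≤ ENNReal.ofReal (2*R) * (ENNReal.ofReal (ρ ^ m) *
          volume (Metric.closedBall (0 : EuclideanSpace ℝ (Fin m)) 1)) := by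
  have hρ : 0 ≤ ρ := hT.1.le
  have hclosed : IsClosed T := by
    obtain ⟨-, p, v, -, rfl⟩ := hT
    exact Metric.isClosed_cthickening
  obtain ⟨F, p, hFmp, hFT, hFball, -⟩ := tube_decomp m T ρ hT
  obtain ⟨c', hc'⟩ := hFball c R
  have hmeas : NullMeasurableSet (T ∩ Metric.closedBall c R) volume :=
    (hclosed.measurableSet.inter measurableSet_closedBall).nullMeasurableSet
  rw [← hFmp.measure_preimage hmeas]
  have hsub : F ⁻¹' (T ∩ Metric.closedBall c R) ⊆
      {x : EuclideanSpace ℝ (Fin (m+1)) |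
        x 0 ∈ Icc (c' 0 - R) (c' 0 + R) ∧ tubeTail m x ∈ Metric.closedBall 0 ρ} := by
    intro x hx
    rw [Set.preimage_inter, hFT, hc'] at hx
    obtain ⟨hx1, hx2⟩ := hx
    have hx2' : ‖x - c'‖ ≤ R := by
      rw [Metric.mem_closedBall, dist_eq_norm] at hx2; exact hx2
    have hdec := norm_sq_decomp m (x - c')
    have hcoord : (x - c') 0 = x 0 - c' 0 := rfl
    rw [hcoord] at hdec
    constructor
    · constructor
      · nlinarith [norm_nonneg (x - c'), norm_nonneg (tubeTail m (x - c')),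
          sq_nonneg (‖tubeTail m (x - c')‖)]
      · nlinarith [norm_nonneg (x - c'), norm_nonneg (tubeTail m (x - c')),
          sq_nonneg (‖tubeTail m (x - c')‖)]
    · rw [Metric.mem_closedBall, dist_zero_right]; exact hx1
  refine (measure_mono hsub).trans ?_
  rw [cylinder_volume m measurableSet_Icc measurableSet_closedBall,
    Real.volume_Icc, volume_closedBall_Em m ρ hρ]
  have : c' 0 + R - (c' 0 - R) = 2*R := by ring
  rw [this]

lemma tube_ball_ge (m : ℕ) (T : Set (EuclideanSpace ℝ (Fin (m+1)))) (r : ℝ)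
    (hT : IsTube T r) (R : ℝ) (hrR : r ≤ R) :
    ∃ p, ENNReal.ofReal (2*Real.sqrt (R^2 - r^2)) * (ENNReal.ofReal (r ^ m) *
          volume (Metric.closedBall (0 : EuclideanSpace ℝ (Fin m)) 1))
        ≤ volume (T ∩ Metric.closedBall p R) := by
  have hr : 0 < r := hT.1
  have hR : 0 ≤ R := hr.le.trans hrR
  have hclosed : IsClosed T := by
    obtain ⟨-, p, v, -, rfl⟩ := hT
    exact Metric.isClosed_cthickening
  obtain ⟨F, p, hFmp, hFT, -, hFpball⟩ := tube_decomp m T r hT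
  refine ⟨p, ?_⟩
  have hmeas : NullMeasurableSet (T ∩ Metric.closedBall p R) volume :=
    (hclosed.measurableSet.inter measurableSet_closedBall).nullMeasurableSet
  rw [← hFmp.measure_preimage hmeas]
  set L := Real.sqrt (R^2 - r^2) with hLdef
  have hL0 : 0 ≤ L := Real.sqrt_nonneg _
  have hL2 : L^2 = R^2 - r^2 := Real.sq_sqrt (by nlinarith)
  have hsub : {x : EuclideanSpace ℝ (Fin (m+1)) |
      x 0 ∈ Icc (-L) L ∧ tubeTail m x ∈ Metric.closedBall 0 r}
      ⊆ F ⁻¹' (T ∩ Metric.closedBall p R) := by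
    intro x hx
    obtain ⟨hx1, hx2⟩ := hx
    rw [Metric.mem_closedBall, dist_zero_right] at hx2
    rw [Set.preimage_inter, hFT, hFpball]
    constructor
    · exact hx2
    · rw [Metric.mem_closedBall, dist_zero_right]
      have hdec := norm_sq_decomp m x
      obtain ⟨ha, hb⟩ := hx1
      have h1 : ‖tubeTail m x‖^2 ≤ r^2 := by nlinarith [norm_nonneg (tubeTail m x)]
      have h2 : (x 0)^2 ≤ L^2 := by nlinarith
      nlinarith [norm_nonneg x]
  refine le_trans (le_of_eq ?_) (measure_mono hsub)
  rw [cylinder_volume m measurableSet_Icc measurableSet_closedBall,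
    Real.volume_Icc, volume_closedBall_Em m r hr.le]
  have : L - (-L) = 2*L := by ring
  rw [this]

lemma tubeMeasure_tube_ge (m : ℕ) (T : Set (EuclideanSpace ℝ (Fin (m+1)))) (r : ℝ)
    (hT : IsTube T r) :
    unitBallVolume m * ENNReal.ofReal (r ^ m) ≤ tubeMeasure (m+1) T := by
  set γ := volume (Metric.closedBall (0 : EuclideanSpace ℝ (Fin m)) 1) with hγ
  have hγtop : γ ≠ ⊤ := measure_closedBall_lt_top.ne
  rw [tubeMeasure]
  simp only [Nat.add_sub_cancel]
  refine le_iInf fun Ts => le_iInf fun rs => le_iInf fun htubes => le_iInf fun hcover => ?_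
  set S := ∑' i, unitBallVolume m * ENNReal.ofReal (rs i ^ m) with hS
  by_cases hStop : S = ⊤
  · rw [hStop]; exact le_top
  have key : ∀ R : ℝ, r ≤ R →
      ENNReal.ofReal (2 * Real.sqrt (R^2 - r^2)) * (ENNReal.ofReal (r ^ m) * γ)
        ≤ ENNReal.ofReal (2 * R) * S := by
    intro R hrR
    obtain ⟨p, hp⟩ := tube_ball_ge m T r hT R hrR
    refine hp.trans ?_
    have hsub : T ∩ Metric.closedBall p R ⊆ ⋃ i, (Ts i ∩ Metric.closedBall p R) := by
      intro x hx
      obtain ⟨hx1, hx2⟩ := hx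
      obtain ⟨i, hi⟩ := mem_iUnion.1 (hcover hx1)
      exact mem_iUnion.2 ⟨i, hi, hx2⟩
    refine (measure_mono hsub).trans ((measure_iUnion_le _).trans ?_)
    have hR0 : 0 ≤ R := hT.1.le.trans hrR
    calc ∑' i, volume (Ts i ∩ Metric.closedBall p R)
        ≤ ∑' i, ENNReal.ofReal (2*R) * (ENNReal.ofReal (rs i ^ m) * γ) :=
          ENNReal.tsum_le_tsum fun i => tube_inter_ball_le m (Ts i) (rs i) (htubes i) p R hR0
      _ = ENNReal.ofReal (2*R) * S := by
          rw [ENNReal.tsum_mul_left]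
          congr 1
          exact tsum_congr fun i => mul_comm _ _
  have hAtop : ENNReal.ofReal (r ^ m) * γ ≠ ⊤ := ENNReal.mul_ne_top ENNReal.ofReal_ne_top hγtop
  have hrm0 : 0 ≤ r ^ m := pow_nonneg hT.1.le m
  set a := r ^ m * γ.toReal with ha
  set s := S.toReal with hs
  have ha0 : 0 ≤ a := mul_nonneg hrm0 ENNReal.toReal_nonneg
  have hs0 : 0 ≤ s := ENNReal.toReal_nonneg
  have haeq : (ENNReal.ofReal (r ^ m) * γ).toReal = a := by
    rw [ENNReal.toReal_mul, ENNReal.toReal_ofReal hrm0]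
  have keyR : ∀ R : ℝ, r ≤ R → (R - r) * a ≤ R * s := by
    intro R hrR
    have h := key R hrR
    have hR0 : 0 ≤ R := hT.1.le.trans hrR
    have hL0 : 0 ≤ Real.sqrt (R^2 - r^2) := Real.sqrt_nonneg _
    have h' : 2 * Real.sqrt (R^2-r^2) * a ≤ 2 * R * s := by
      have h2 := ENNReal.toReal_mono (ENNReal.mul_ne_top ENNReal.ofReal_ne_top hStop) h
      rwa [ENNReal.toReal_mul, ENNReal.toReal_mul, ENNReal.toReal_mul,
        ENNReal.toReal_ofReal (by positivity), ENNReal.toReal_ofReal hrm0,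
        ENNReal.toReal_ofReal (by linarith)] at h2
    have hLge : R - r ≤ Real.sqrt (R^2 - r^2) := by
      rcases le_or_gt (R - r) 0 with h0 | h0
      · exact h0.trans hL0
      · have hsq : (R-r)^2 ≤ R^2 - r^2 := by nlinarith [hT.1.le]
        calc R - r = Real.sqrt ((R-r)^2) := (Real.sqrt_sq (by linarith)).symm
          _ ≤ _ := Real.sqrt_le_sqrt hsq
    nlinarith
  have has : a ≤ s := by
    by_contra hc
    push_neg at hc
    have hd0 : 0 < a - s := by linarith
    set K := (r * a + 1) / (a - s) with hK
    have hr0 : 0 < r := hT.1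
    have hK0 : 0 < K := by positivity
    have h := keyR (r + K) (by linarith)
    have hKd : K * (a - s) = r * a + 1 := div_mul_cancel₀ _ hd0.ne'
    nlinarith
  rw [show unitBallVolume m * ENNReal.ofReal (r^m) = ENNReal.ofReal (r^m) * γ from mul_comm _ _]
  rw [← haeq] at has
  exact (ENNReal.toReal_le_toReal hAtop hStop).1 has

lemma geom_tail_one : ∑' i : ℕ, (2⁻¹ : ENNReal)^(i+1) = 1 := by
  have h : ∑' i : ℕ, (2⁻¹ : ENNReal)^(i+1) = (∑' i : ℕ, (2⁻¹ : ENNReal)^i) * 2⁻¹ := by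
    rw [← ENNReal.tsum_mul_right]
    exact tsum_congr fun i => (pow_succ _ _)
  rw [h, ENNReal.tsum_geometric, ENNReal.one_sub_inv_two, inv_inv]
  exact ENNReal.mul_inv_cancel (by norm_num) (by norm_num)

lemma tubeMeasure_le_of_cover (n : ℕ) (E : Set (EuclideanSpace ℝ (Fin n)))
    (Ts : ℕ → Set (EuclideanSpace ℝ (Fin n))) (rs : ℕ → ℝ)
    (htubes : ∀ i, IsTube (Ts i) (rs i)) (hcover : E ⊆ ⋃ i, Ts i) :
    tubeMeasure n E ≤ ∑' i, unitBallVolume (n - 1) * ENNReal.ofReal (rs i ^ (n - 1)) :=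
  iInf_le_of_le Ts (iInf_le_of_le rs (iInf_le_of_le htubes (iInf_le _ hcover)))

set_option maxHeartbeats 1000000 in
lemma tubeMeasure_tube_le (m : ℕ) (hm : 1 ≤ m) (T : Set (EuclideanSpace ℝ (Fin (m+1))))
    (r : ℝ) (hT : IsTube T r) :
    tubeMeasure (m+1) T ≤ unitBallVolume m * ENNReal.ofReal (r ^ m) := by
  have hγtop : unitBallVolume m ≠ ⊤ := measure_closedBall_lt_top.ne
  have step : ∀ δ : ℝ, 0 < δ →
      tubeMeasure (m+1) T ≤ unitBallVolume m * ENNReal.ofReal (r^m)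
        + unitBallVolume m * ENNReal.ofReal (δ^m) := by
    intro δ hδ
    obtain ⟨hr, p, v, hv, hTeq⟩ := hT
    have htubes : ∀ i, IsTube
        (if i = 0 then T else
          Metric.cthickening (δ * (2⁻¹:ℝ)^i) {x : EuclideanSpace ℝ (Fin (m+1)) | ∃ t : ℝ, x = p + t • v})
        (if i = 0 then r else δ * (2⁻¹:ℝ)^i) := by
      intro i
      by_cases hi : i = 0
      · rw [if_pos hi, if_pos hi]
        exact ⟨hr, p, v, hv, hTeq⟩
      · rw [if_neg hi, if_neg hi]
        exact ⟨by positivity, p, v, hv, rfl⟩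
    have hcover : T ⊆ ⋃ i, (if i = 0 then T else
        Metric.cthickening (δ * (2⁻¹:ℝ)^i) {x : EuclideanSpace ℝ (Fin (m+1)) | ∃ t : ℝ, x = p + t • v}) :=
      fun x hx => mem_iUnion.2 ⟨0, by simpa using hx⟩
    have h1 := tubeMeasure_le_of_cover (m+1) T _ _ htubes hcover
    rw [Nat.add_sub_cancel] at h1
    refine h1.trans ?_
    rw [tsum_eq_zero_add' ENNReal.summable]
    refine add_le_add (le_of_eq (by norm_num)) ?_
    have hpt : ∀ i : ℕ, unitBallVolume m *
        ENNReal.ofReal ((if i + 1 = 0 then r else δ * (2⁻¹:ℝ)^(i+1)) ^ m)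
        ≤ unitBallVolume m * ENNReal.ofReal (δ^m) * (2⁻¹ : ENNReal)^(i+1) := by
      intro i
      rw [if_neg (Nat.succ_ne_zero i), mul_assoc]
      refine mul_le_mul_right ?_ _
      have h3 : (δ * (2⁻¹:ℝ)^(i+1))^m ≤ δ^m * (2⁻¹:ℝ)^(i+1) := by
        rw [mul_pow]
        refine mul_le_mul_of_nonneg_left ?_ (by positivity)
        exact pow_le_of_le_one (by positivity) (pow_le_one₀ (by norm_num) (by norm_num)) (by omega)
      refine (ENNReal.ofReal_le_ofReal h3).trans ?_
      have h4 : ENNReal.ofReal ((2⁻¹:ℝ) ^ (i + 1)) = (2⁻¹ : ENNReal)^(i+1) := by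
        rw [ENNReal.ofReal_pow (by norm_num)]
        congr 1
        rw [ENNReal.ofReal_inv_of_pos (by norm_num)]
        norm_num
      rw [ENNReal.ofReal_mul (pow_nonneg hδ.le m), h4]
    refine (ENNReal.tsum_le_tsum hpt).trans ?_
    rw [ENNReal.tsum_mul_left, geom_tail_one, mul_one]
  have hlim : Filter.Tendsto (fun δ : ℝ => unitBallVolume m * ENNReal.ofReal (r^m)
        + unitBallVolume m * ENNReal.ofReal (δ^m))
      (nhdsWithin 0 (Set.Ioi 0)) (nhds (unitBallVolume m * ENNReal.ofReal (r^m))) := by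
    have t1 : Filter.Tendsto (fun δ : ℝ => δ^m) (nhdsWithin 0 (Set.Ioi 0)) (nhds 0) := by
      have := (continuous_pow m).tendsto (0:ℝ)
      rw [zero_pow (by omega : m ≠ 0)] at this
      exact this.mono_left nhdsWithin_le_nhds
    have t2 : Filter.Tendsto (fun δ : ℝ => ENNReal.ofReal (δ^m))
        (nhdsWithin 0 (Set.Ioi 0)) (nhds 0) := by
      have := (ENNReal.tendsto_ofReal t1)
      rwa [ENNReal.ofReal_zero] at this
    have t3 : Filter.Tendsto (fun δ : ℝ => unitBallVolume m * ENNReal.ofReal (δ^m))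
        (nhdsWithin 0 (Set.Ioi 0)) (nhds 0) := by
      have := ENNReal.Tendsto.const_mul (a := unitBallVolume m) t2 (Or.inr hγtop)
      rwa [mul_zero] at this
    have t4 := Filter.Tendsto.const_add (unitBallVolume m * ENNReal.ofReal (r^m)) t3
    rwa [add_zero] at t4
  refine ge_of_tendsto hlim ?_
  filter_upwards [self_mem_nhdsWithin] with δ hδ
  exact step δ hδ

/-- The tube-measure of a single tube of cross-sectional radius `r` is exactly its
cross-sectional volume `γ_{n-1} · r^{n-1}`. -/
theorem tubeMeasure_tube (n : ℕ) (hn : 2 ≤ n)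
    (T : Set (EuclideanSpace ℝ (Fin n))) (r : ℝ) (hT : IsTube T r) :
    tubeMeasure n T = unitBallVolume (n - 1) * ENNReal.ofReal (r ^ (n - 1)) := by
  obtain ⟨m, rfl⟩ : ∃ m, n = m + 1 := ⟨n - 1, by omega⟩
  simp only [Nat.add_sub_cancel]
  exact le_antisymm (tubeMeasure_tube_le m (by omega) T r hT) (tubeMeasure_tube_ge m T r hT)
end

section
/- For every δ > 0, the tube-measure of the 'square tube' [−δ, δ]^{n−1} × ℝ ⊆ ℝⁿ (n ≥ 2) equals (2δ)^{n−1}. -/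
open MeasureTheory Metric Set

/-- The square tube `[-δ, δ]^{n-1} × ℝ` inside `ℝ^n = ℝ^{n-1} × ℝ`. -/
def squareTube (m : ℕ) (δ : ℝ) : Set (EuclideanSpace ℝ (Fin (m + 1))) :=
  {x | ∀ i : Fin m, x i.castSucc ∈ Set.Icc (-δ) δ}

open scoped ENNReal NNReal

lemma unitBallVolume_pos (k : ℕ) : 0 < unitBallVolume k := by
  apply measure_closedBall_pos
  norm_num

lemma unitBallVolume_ne_top (k : ℕ) : unitBallVolume k ≠ ⊤ :=
  (measure_closedBall_lt_top).ne

lemma volume_closedBall_eucl (k : ℕ) (x : EuclideanSpace ℝ (Fin k)) {r : ℝ} (hr : 0 ≤ r) :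
    volume (Metric.closedBall x r) = ENNReal.ofReal (r ^ k) * unitBallVolume k := by
  rw [Measure.addHaar_closedBall' _ _ hr, finrank_euclideanSpace_fin, unitBallVolume]

/-- volume of a "cylinder" set in Euclidean space over pivot coordinate `i₀`. -/
lemma cylinder_vol (m : ℕ) (i₀ : Fin (m + 1)) (s : Set ℝ) (hs : MeasurableSet s)
    (B : Set (Fin m → ℝ)) (hB : MeasurableSet B) :
    volume {y : EuclideanSpace ℝ (Fin (m + 1)) |
        y i₀ ∈ s ∧ (fun i => y (i₀.succAbove i)) ∈ B} = volume s * volume B := by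
  have h1 := EuclideanSpace.volume_preserving_symm_measurableEquiv_toLp (Fin (m + 1))
  have h2 := MeasureTheory.volume_preserving_piFinSuccAbove (fun _ : Fin (m + 1) => ℝ) i₀
  have hset : {y : EuclideanSpace ℝ (Fin (m + 1)) |
      y i₀ ∈ s ∧ (fun i => y (i₀.succAbove i)) ∈ B} =
      ((MeasurableEquiv.toLp 2 (Fin (m + 1) → ℝ)).symm) ⁻¹'
        ((MeasurableEquiv.piFinSuccAbove (fun _ : Fin (m + 1) => ℝ) i₀) ⁻¹' (s ×ˢ B)) := by
    ext y
    rfl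
  rw [hset, h1.measure_preimage, h2.measure_preimage]
  · rw [show (volume : Measure (ℝ × (Fin m → ℝ))) = (volume : Measure ℝ).prod volume from rfl,
      Measure.prod_prod]
  · exact (hs.prod hB).nullMeasurableSet
  · exact ((MeasurableEquiv.piFinSuccAbove _ i₀).measurable (hs.prod hB)).nullMeasurableSet

lemma volume_ball_pi (m : ℕ) {r : ℝ} (hr : 0 ≤ r) :
    volume (((MeasurableEquiv.toLp 2 (Fin m → ℝ)).symm).symm ⁻¹'
      (Metric.closedBall (0 : EuclideanSpace ℝ (Fin m)) r)) =
      ENNReal.ofReal (r ^ m) * unitBallVolume m := by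
  rw [MeasurePreserving.measure_preimage
    (EuclideanSpace.volume_preserving_symm_measurableEquiv_toLp (Fin m)).symm
    measurableSet_closedBall.nullMeasurableSet, volume_closedBall_eucl m _ hr]

lemma volume_cube_pi (m : ℕ) {δ : ℝ} (hδ : 0 ≤ δ) :
    volume (Set.pi univ (fun _ : Fin m => Icc (-δ) δ)) = ENNReal.ofReal ((2 * δ) ^ m) := by
  rw [volume_pi_pi]
  simp only [Real.volume_Icc, sub_neg_eq_add]
  rw [Finset.prod_const, show δ + δ = 2 * δ by ring, ← ENNReal.ofReal_pow (by linarith),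
    Finset.card_univ, Fintype.card_fin]

lemma volume_cubeF (m : ℕ) {δ : ℝ} (hδ : 0 ≤ δ) :
    volume {z : EuclideanSpace ℝ (Fin m) | ∀ i, z i ∈ Icc (-δ) δ} =
      ENNReal.ofReal ((2 * δ) ^ m) := by
  have hset : {z : EuclideanSpace ℝ (Fin m) | ∀ i, z i ∈ Icc (-δ) δ} =
      ((MeasurableEquiv.toLp 2 (Fin m → ℝ)).symm) ⁻¹' (Set.pi univ (fun _ => Icc (-δ) δ)) := by
    ext z
    simp only [Set.mem_setOf_eq, Set.mem_preimage, Set.mem_pi, Set.mem_univ, forall_true_left,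
      true_implies]
    rfl
  rw [hset, (EuclideanSpace.volume_preserving_symm_measurableEquiv_toLp (Fin m)).measure_preimage
    (MeasurableSet.univ_pi (fun _ => measurableSet_Icc)).nullMeasurableSet,
    volume_cube_pi m hδ]

open scoped RealInnerProductSpace in
lemma dist_line_ge {E : Type*} [NormedAddCommGroup E] [InnerProductSpace ℝ E]
    {v : E} (hvv : ⟪v, v⟫ = 1) (w : E) (s : ℝ) :
    ‖w - ⟪w, v⟫ • v‖ ≤ ‖w - s • v‖ := by
  have hdecomp : w - s • v = (w - ⟪w, v⟫ • v) + (⟪w, v⟫ - s) • v := by module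
  have hperp : ⟪w - ⟪w, v⟫ • v, (⟪w, v⟫ - s) • v⟫ = 0 := by
    rw [real_inner_smul_right, inner_sub_left, real_inner_smul_left, hvv]
    ring
  have hsq : ‖(w - ⟪w, v⟫ • v) + (⟪w, v⟫ - s) • v‖ ^ 2 =
      ‖w - ⟪w, v⟫ • v‖ ^ 2 + ‖(⟪w, v⟫ - s) • v‖ ^ 2 := by
    rw [norm_add_sq_real, hperp]; ring
  rw [hdecomp]
  nlinarith [norm_nonneg ((w - ⟪w, v⟫ • v) + (⟪w, v⟫ - s) • v),
    norm_nonneg (w - ⟪w, v⟫ • v), sq_nonneg ‖(⟪w, v⟫ - s) • v‖]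

open scoped RealInnerProductSpace in
lemma segment_bound (m : ℕ) (p v : EuclideanSpace ℝ (Fin (m + 1))) (hv : ‖v‖ = 1)
    {r B : ℝ} (hr : 0 ≤ r) (hB : 0 ≤ B) :
    volume {x : EuclideanSpace ℝ (Fin (m + 1)) |
      EMetric.infEdist x {y | ∃ t : ℝ, y = p + t • v} ≤ ENNReal.ofReal r ∧ ‖x‖ ≤ B}
      ≤ ENNReal.ofReal (2 * B) * (ENNReal.ofReal (r ^ m) * unitBallVolume m) := by
  classical
  have hvv : ⟪v, v⟫ = 1 := by
    rw [real_inner_self_eq_norm_sq, hv]; norm_num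
  obtain ⟨q, hqv, hqp⟩ : ∃ q : EuclideanSpace ℝ (Fin (m + 1)), ⟪q, v⟫ = 0 ∧
      ∀ t : ℝ, p + t • v = q + (⟪p, v⟫ + t) • v := by
    refine ⟨p - ⟪p, v⟫ • v, ?_, fun t => by module⟩
    rw [inner_sub_left, real_inner_smul_left, hvv]; ring
  -- Step 1: the set is contained in a "segment" set
  have hsub : {x : EuclideanSpace ℝ (Fin (m + 1)) |
      EMetric.infEdist x {y | ∃ t : ℝ, y = p + t • v} ≤ ENNReal.ofReal r ∧ ‖x‖ ≤ B} ⊆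
      {x : EuclideanSpace ℝ (Fin (m + 1)) | ‖x - q - ⟪x, v⟫ • v‖ ≤ r ∧ |⟪x, v⟫| ≤ B} := by
    rintro x ⟨hx1, hx2⟩
    constructor
    · have key : ENNReal.ofReal ‖x - q - ⟪x, v⟫ • v‖ ≤
          EMetric.infEdist x {y | ∃ t : ℝ, y = p + t • v} := by
        rw [EMetric.infEdist, EMetric.le_infEdist]
        rintro y ⟨t, rfl⟩
        rw [edist_dist, dist_eq_norm]
        apply ENNReal.ofReal_le_ofReal
        rw [hqp t]
        have hxw : ⟪x, v⟫ = ⟪x - q, v⟫ := by rw [inner_sub_left, hqv]; ring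
        have h1 : x - q - ⟪x, v⟫ • v = (x - q) - ⟪x - q, v⟫ • v := by rw [← hxw]
        have h2 : x - (q + (⟪p, v⟫ + t) • v) = (x - q) - (⟪p, v⟫ + t) • v := by module
        rw [h1, h2]
        exact dist_line_ge hvv (x - q) _
      have := key.trans hx1
      rwa [ENNReal.ofReal_le_ofReal_iff hr] at this
    · calc |⟪x, v⟫| ≤ ‖x‖ * ‖v‖ := abs_real_inner_le_norm x v
        _ ≤ B := by rw [hv, mul_one]; exact hx2
  refine le_trans (measure_mono hsub) ?_
  -- Step 2: translate by q
  have htrans : {x : EuclideanSpace ℝ (Fin (m + 1)) | ‖x - q - ⟪x, v⟫ • v‖ ≤ r ∧ |⟪x, v⟫| ≤ B} =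
      (fun x : EuclideanSpace ℝ (Fin (m + 1)) => x + -q) ⁻¹'
        {w : EuclideanSpace ℝ (Fin (m + 1)) | ‖w - ⟪w, v⟫ • v‖ ≤ r ∧ |⟪w, v⟫| ≤ B} := by
    ext x
    have h1 : ⟪x + -q, v⟫ = ⟪x, v⟫ := by
      rw [inner_add_left, inner_neg_left, hqv]; ring
    simp only [Set.mem_setOf_eq, Set.mem_preimage, h1]
    have h2 : x + -q - ⟪x, v⟫ • v = x - q - ⟪x, v⟫ • v := by module
    rw [h2]
  rw [htrans, measure_preimage_add_right]
  -- Step 3: orthonormal basis with b 0 = v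
  obtain ⟨b, hb0⟩ : ∃ b : OrthonormalBasis (Fin (m + 1)) ℝ (EuclideanSpace ℝ (Fin (m + 1))), b 0 = v := by
    have hcard : Module.finrank ℝ (EuclideanSpace ℝ (Fin (m + 1))) =
        Fintype.card (Fin (m + 1)) := by
      simp [finrank_euclideanSpace_fin]
    have horth : Orthonormal ℝ (({0} : Set (Fin (m + 1))).restrict (fun _ => v)) := by
      constructor
      · intro i; exact hv
      · intro i j hij
        exact absurd (Subtype.ext (i.2.trans j.2.symm)) hij
    obtain ⟨b, hb⟩ := horth.exists_orthonormalBasis_extension_of_card_eq hcard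
    exact ⟨b, hb 0 rfl⟩
  -- Step 4: the translated set is the preimage under b.repr of a cylinder set
  set BF : Set (Fin m → ℝ) :=
    ((MeasurableEquiv.toLp 2 (Fin m → ℝ)).symm).symm ⁻¹' (Metric.closedBall 0 r) with hBF
  have hBFmeas : MeasurableSet BF :=
    ((MeasurableEquiv.toLp 2 (Fin m → ℝ)).symm).symm.measurable measurableSet_closedBall
  set A : Set (EuclideanSpace ℝ (Fin (m + 1))) :=
    {y | y 0 ∈ Icc (-B) B ∧ (fun i => y ((0 : Fin (m + 1)).succAbove i)) ∈ BF} with hA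
  have hAmeas : MeasurableSet A := by
    apply MeasurableSet.inter
    · exact ((measurable_pi_apply (0 : Fin (m + 1))).comp (WithLp.measurable_ofLp _ _)) measurableSet_Icc
    · exact ((measurable_pi_lambda _ fun i =>
        measurable_pi_apply ((0 : Fin (m + 1)).succAbove i)).comp (WithLp.measurable_ofLp 2 (Fin (m + 1) → ℝ))) hBFmeas
  have hYA : {w : EuclideanSpace ℝ (Fin (m + 1)) | ‖w - ⟪w, v⟫ • v‖ ≤ r ∧ |⟪w, v⟫| ≤ B} = b.repr ⁻¹' A := by
    ext w
    have hy0 : ⟪w, v⟫ = b.repr w 0 := by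
      rw [b.repr_apply_apply, hb0, real_inner_comm]
    have hnorm : ‖w - ⟪w, v⟫ • v‖ =
        ‖((MeasurableEquiv.toLp 2 (Fin m → ℝ)).symm).symm
          (fun i => b.repr w ((0 : Fin (m + 1)).succAbove i))‖ := by
      have h1 : ‖w - ⟪w, v⟫ • v‖ = ‖b.repr (w - ⟪w, v⟫ • v)‖ :=
        (b.repr.norm_map _).symm
      have h2 : b.repr (w - ⟪w, v⟫ • v) =
          b.repr w - b.repr w 0 • EuclideanSpace.single 0 (1 : ℝ) := by
        rw [map_sub, LinearIsometryEquiv.map_smul, hy0, ← hb0, b.repr_self]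
      rw [h1, h2, EuclideanSpace.norm_eq, EuclideanSpace.norm_eq]
      congr 1
      rw [Fin.sum_univ_succAbove _ (0 : Fin (m + 1))]
      have hz : ‖(b.repr w - b.repr w 0 • EuclideanSpace.single 0 (1 : ℝ) :
          EuclideanSpace ℝ (Fin (m + 1))) 0‖ = 0 := by
        simp [EuclideanSpace.single_apply]
      rw [hz]
      simp only [zero_pow, ne_eq, OfNat.ofNat_ne_zero, not_false_eq_true, zero_add]
      apply Finset.sum_congr rfl
      intro i _
      congr 1
      simp [MeasurableEquiv.symm_symm, MeasurableEquiv.coe_toLp,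
        EuclideanSpace.single_apply, Fin.succ_ne_zero i, PiLp.sub_apply, PiLp.smul_apply]
    have hnorm' : ‖w - b.repr w 0 • v‖ =
        ‖((MeasurableEquiv.toLp 2 (Fin m → ℝ)).symm).symm
          (fun i => b.repr w ((0 : Fin (m + 1)).succAbove i))‖ := by
      rw [← hy0]; exact hnorm
    simp only [Set.mem_setOf_eq, Set.mem_preimage, hA, Set.mem_setOf_eq, hy0, hnorm',
      Set.mem_Icc, ← abs_le, hBF, Set.mem_preimage, mem_closedBall_zero_iff]
    tauto
  rw [hYA, MeasurePreserving.measure_preimage b.measurePreserving_repr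
    hAmeas.nullMeasurableSet]
  -- Step 5: compute
  have := cylinder_vol m 0 (Icc (-B) B) measurableSet_Icc BF hBFmeas
  rw [hA, this, Real.volume_Icc, volume_ball_pi m hr]
  rw [show B - -B = 2 * B by ring]


lemma volume_QR (m : ℕ) {δ R : ℝ} (hδ : 0 ≤ δ) (hR : 0 ≤ R) :
    volume {x : EuclideanSpace ℝ (Fin (m + 1)) |
      x ∈ squareTube m δ ∧ x (Fin.last m) ∈ Icc (-R) R} =
      ENNReal.ofReal (2 * R) * ENNReal.ofReal ((2 * δ) ^ m) := by
  have hset : {x : EuclideanSpace ℝ (Fin (m + 1)) |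
      x ∈ squareTube m δ ∧ x (Fin.last m) ∈ Icc (-R) R} =
      {y : EuclideanSpace ℝ (Fin (m + 1)) | y (Fin.last m) ∈ Icc (-R) R ∧
        (fun i => y ((Fin.last m).succAbove i)) ∈ Set.pi univ (fun _ : Fin m => Icc (-δ) δ)} := by
    ext y
    simp only [Set.mem_setOf_eq, squareTube, Set.mem_pi, Set.mem_univ, true_implies]
    constructor
    · rintro ⟨h1, h2⟩
      exact ⟨h2, fun i => by rw [Fin.succAbove_last_apply]; exact h1 i⟩
    · rintro ⟨h1, h2⟩
      exact ⟨fun i => by have := h2 i; rwa [Fin.succAbove_last_apply] at this, h1⟩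
  rw [hset, cylinder_vol m (Fin.last m) _ measurableSet_Icc _
    (MeasurableSet.univ_pi fun _ => measurableSet_Icc), volume_cube_pi m hδ,
    Real.volume_Icc, show R - -R = 2 * R by ring]

lemma norm_le_of_mem_QR (m : ℕ) {δ R : ℝ} (hδ : 0 ≤ δ) (hR : 0 ≤ R)
    (x : EuclideanSpace ℝ (Fin (m + 1))) (hx : x ∈ squareTube m δ)
    (hlast : x (Fin.last m) ∈ Icc (-R) R) : ‖x‖ ≤ Real.sqrt m * δ + R := by
  rw [EuclideanSpace.norm_eq]
  have h1 : ∑ j, ‖x j‖ ^ 2 ≤ m * δ ^ 2 + R ^ 2 := by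
    rw [Fin.sum_univ_castSucc]
    have hbd : ∀ i : Fin m, ‖x i.castSucc‖ ^ 2 ≤ δ ^ 2 := by
      intro i
      obtain ⟨h1, h2⟩ := hx i
      rw [Real.norm_eq_abs, sq_abs]
      nlinarith
    have hsum : ∑ i : Fin m, ‖x i.castSucc‖ ^ 2 ≤ ∑ _i : Fin m, δ ^ 2 :=
      Finset.sum_le_sum fun i _ => hbd i
    rw [Finset.sum_const, Finset.card_univ, Fintype.card_fin, nsmul_eq_mul] at hsum
    have hlast2 : ‖x (Fin.last m)‖ ^ 2 ≤ R ^ 2 := by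
      obtain ⟨h1, h2⟩ := hlast
      rw [Real.norm_eq_abs, sq_abs]
      nlinarith
    linarith
  have hsqm : Real.sqrt m ^ 2 = (m : ℝ) := Real.sq_sqrt (Nat.cast_nonneg m)
  have h2 : ∑ j, ‖x j‖ ^ 2 ≤ (Real.sqrt m * δ + R) ^ 2 := by
    nlinarith [mul_nonneg (mul_nonneg (Real.sqrt_nonneg (m : ℝ)) hδ) hR]
  calc Real.sqrt (∑ j, ‖x j‖ ^ 2) ≤ Real.sqrt ((Real.sqrt m * δ + R) ^ 2) :=
        Real.sqrt_le_sqrt h2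
    _ = Real.sqrt m * δ + R := Real.sqrt_sq (by positivity)


lemma tube_lower (m : ℕ) {δ : ℝ} (hδ : 0 < δ)
    (T : ℕ → Set (EuclideanSpace ℝ (Fin (m + 1)))) (r : ℕ → ℝ)
    (htube : ∀ i, IsTube (T i) (r i)) (hcover : squareTube m δ ⊆ ⋃ i, T i) :
    ENNReal.ofReal ((2 * δ) ^ m) ≤ ∑' i, unitBallVolume m * ENNReal.ofReal (r i ^ m) := by
  set S := ∑' i, unitBallVolume m * ENNReal.ofReal (r i ^ m) with hSdef
  by_cases hStop : S = ⊤
  · exact hStop ▸ le_top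
  have key : ∀ R : ℝ, 0 < R →
      ENNReal.ofReal (2 * R) * ENNReal.ofReal ((2 * δ) ^ m) ≤
        ENNReal.ofReal (2 * (Real.sqrt m * δ + R)) * S := by
    intro R hR
    set B : ℝ := Real.sqrt m * δ + R with hB
    have hB0 : 0 ≤ B := by positivity
    set QR : Set (EuclideanSpace ℝ (Fin (m + 1))) :=
      {x | x ∈ squareTube m δ ∧ x (Fin.last m) ∈ Icc (-R) R} with hQR
    have hQsub : QR ⊆ ⋃ i, (T i ∩ QR) := by
      intro x hx
      obtain ⟨j, hj⟩ := Set.mem_iUnion.mp (hcover hx.1)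
      exact Set.mem_iUnion.mpr ⟨j, hj, hx⟩
    have hterm : ∀ i, volume (T i ∩ QR) ≤
        ENNReal.ofReal (2 * B) * (ENNReal.ofReal (r i ^ m) * unitBallVolume m) := by
      intro i
      obtain ⟨hri, p, v, hv0, hTeq⟩ := htube i
      set u : EuclideanSpace ℝ (Fin (m + 1)) := ‖v‖⁻¹ • v with hu
      have hu1 : ‖u‖ = 1 := norm_smul_inv_norm hv0
      have hline : {x : EuclideanSpace ℝ (Fin (m + 1)) | ∃ t : ℝ, x = p + t • v} =
          {x | ∃ t : ℝ, x = p + t • u} := by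
        ext x
        constructor
        · rintro ⟨t, rfl⟩
          refine ⟨t * ‖v‖, ?_⟩
          rw [hu, smul_smul, mul_assoc, mul_inv_cancel₀ (norm_ne_zero_iff.mpr hv0), mul_one]
        · rintro ⟨t, rfl⟩
          exact ⟨t * ‖v‖⁻¹, by rw [hu, smul_smul]⟩
      have hsub : T i ∩ QR ⊆ {x : EuclideanSpace ℝ (Fin (m + 1)) |
          EMetric.infEdist x {y | ∃ t : ℝ, y = p + t • u} ≤ ENNReal.ofReal (r i) ∧ ‖x‖ ≤ B} := by
        rintro x ⟨hxT, hxQ⟩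
        rw [hTeq, hline] at hxT
        exact ⟨Metric.mem_cthickening_iff.mp hxT,
          norm_le_of_mem_QR m hδ.le hR.le x hxQ.1 hxQ.2⟩
      exact (measure_mono hsub).trans (segment_bound m p u hu1 hri.le hB0)
    calc ENNReal.ofReal (2 * R) * ENNReal.ofReal ((2 * δ) ^ m) = volume QR :=
          (volume_QR m hδ.le hR.le).symm
      _ ≤ ∑' i, volume (T i ∩ QR) := (measure_mono hQsub).trans (measure_iUnion_le _)
      _ ≤ ∑' i, ENNReal.ofReal (2 * B) * (ENNReal.ofReal (r i ^ m) * unitBallVolume m) :=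
          ENNReal.tsum_le_tsum hterm
      _ = ENNReal.ofReal (2 * B) * S := by
          rw [ENNReal.tsum_mul_left]
          congr 1
          exact tsum_congr fun i => by rw [mul_comm]
  set s : ℝ := S.toReal with hs
  have hs0 : 0 ≤ s := ENNReal.toReal_nonneg
  have hreal : ∀ R : ℝ, 0 < R →
      2 * R * ((2 * δ) ^ m) ≤ 2 * (Real.sqrt m * δ + R) * s := by
    intro R hR
    have h := key R hR
    rw [← ENNReal.ofReal_mul (by positivity)] at h
    have hfin : ENNReal.ofReal (2 * (Real.sqrt m * δ + R)) * S ≠ ⊤ :=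
      ENNReal.mul_ne_top ENNReal.ofReal_ne_top hStop
    have h2 := ENNReal.toReal_mono hfin h
    rwa [ENNReal.toReal_ofReal (by positivity), ENNReal.toReal_mul,
      ENNReal.toReal_ofReal (by positivity)] at h2
  have hfin : (2 * δ) ^ m ≤ s := by
    apply le_of_forall_pos_le_add
    intro ε hε
    set R : ℝ := max 1 (Real.sqrt m * δ * s / ε) with hRdef
    have hR : 0 < R := lt_of_lt_of_le one_pos (le_max_left _ _)
    have h := hreal R hR
    have hεR : Real.sqrt m * δ * s ≤ ε * R := by
      have h1 : Real.sqrt m * δ * s / ε ≤ R := le_max_right _ _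
      calc Real.sqrt m * δ * s = ε * (Real.sqrt m * δ * s / ε) := by
            field_simp
        _ ≤ ε * R := by exact mul_le_mul_of_nonneg_left h1 hε.le
    nlinarith
  calc ENNReal.ofReal ((2 * δ) ^ m) ≤ ENNReal.ofReal s := ENNReal.ofReal_le_ofReal hfin
    _ = S := ENNReal.ofReal_toReal hStop

lemma exists_small_radius {m : ℕ} (hm : 1 ≤ m) (γ : ℝ≥0∞) (hγ : γ ≠ ⊤) (b : ℝ≥0∞)
    (hb : b ≠ 0) : ∃ c : ℝ, 0 < c ∧ γ * ENNReal.ofReal (c ^ m) ≤ b := by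
  rcases eq_or_ne b ⊤ with hb' | hb'
  · exact ⟨1, one_pos, hb' ▸ le_top⟩
  set c : ℝ := min 1 (b.toReal / (γ.toReal + 1)) with hc
  have hbt : 0 < b.toReal := ENNReal.toReal_pos hb hb'
  have hγ1 : 0 < γ.toReal + 1 := by positivity
  have hc0 : 0 < c := lt_min one_pos (by positivity)
  refine ⟨c, hc0, ?_⟩
  have h1 : c ^ m ≤ c := by
    calc c ^ m ≤ c ^ 1 := pow_le_pow_of_le_one hc0.le (min_le_left _ _) hm
      _ = c := pow_one c
  calc γ * ENNReal.ofReal (c ^ m) ≤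
      ENNReal.ofReal (γ.toReal + 1) * ENNReal.ofReal (b.toReal / (γ.toReal + 1)) := by
        apply mul_le_mul'
        · conv_lhs => rw [← ENNReal.ofReal_toReal hγ]
          exact ENNReal.ofReal_le_ofReal (by linarith)
        · exact ENNReal.ofReal_le_ofReal (h1.trans (min_le_right _ _))
    _ = ENNReal.ofReal ((γ.toReal + 1) * (b.toReal / (γ.toReal + 1))) :=
        (ENNReal.ofReal_mul (by positivity)).symm
    _ = ENNReal.ofReal b.toReal := by rw [mul_div_cancel₀ _ hγ1.ne']
    _ = b := ENNReal.ofReal_toReal hb'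

noncomputable def projF (m : ℕ) (x : EuclideanSpace ℝ (Fin (m + 1))) :
    EuclideanSpace ℝ (Fin m) :=
  WithLp.toLp 2 (fun i : Fin m => x i.castSucc)

noncomputable def vpt (m : ℕ) (z : EuclideanSpace ℝ (Fin m)) : EuclideanSpace ℝ (Fin (m + 1)) :=
  WithLp.toLp 2 (fun j : Fin (m + 1) => (Fin.lastCases 0 (fun i => z i) j : ℝ))

noncomputable def vdir (m : ℕ) : EuclideanSpace ℝ (Fin (m + 1)) :=
  EuclideanSpace.single (Fin.last m) (1 : ℝ)

lemma vdir_ne (m : ℕ) : vdir m ≠ 0 := by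
  intro h
  have h2 : (vdir m) (Fin.last m) = 0 := by rw [h]; rfl
  rw [vdir, EuclideanSpace.single_apply, if_pos rfl] at h2
  exact one_ne_zero h2

lemma mem_vert_tube {m : ℕ} {z : EuclideanSpace ℝ (Fin m)} {ρ : ℝ}
    {x : EuclideanSpace ℝ (Fin (m + 1))}
    (h : dist (projF m x) z ≤ ρ) :
    x ∈ Metric.cthickening ρ {y : EuclideanSpace ℝ (Fin (m + 1)) |
      ∃ t : ℝ, y = vpt m z + t • vdir m} := by
  rw [Metric.mem_cthickening_iff]
  refine le_trans (EMetric.infEdist_le_edist_of_mem ⟨x (Fin.last m), rfl⟩) ?_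
  rw [edist_dist]
  apply ENNReal.ofReal_le_ofReal
  have hdist : dist x (vpt m z + x (Fin.last m) • vdir m) = dist (projF m x) z := by
    have hrhs : dist (projF m x) z =
        Real.sqrt (∑ i : Fin m, dist (projF m x i) (z i) ^ 2) := EuclideanSpace.dist_eq _ _
    rw [EuclideanSpace.dist_eq, hrhs]
    congr 1
    rw [Fin.sum_univ_castSucc]
    have hco : ∀ i : Fin m, (vpt m z + x (Fin.last m) • vdir m) i.castSucc = z i := by
      intro i
      have : (i.castSucc : Fin (m + 1)) ≠ Fin.last m := (Fin.castSucc_lt_last i).ne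
      simp [vpt, vdir, PiLp.add_apply, PiLp.smul_apply, EuclideanSpace.single_apply, this,
        smul_eq_mul]
    have hlast : (vpt m z + x (Fin.last m) • vdir m) (Fin.last m) = x (Fin.last m) := by
      simp [vpt, vdir, PiLp.add_apply, PiLp.smul_apply, EuclideanSpace.single_apply,
        smul_eq_mul]
    rw [hlast]
    simp only [dist_self, ne_eq, OfNat.ofNat_ne_zero, not_false_eq_true, zero_pow, add_zero]
    apply Finset.sum_congr rfl
    intro i _
    rw [hco i]
    rfl
  rw [hdist]
  exact h

lemma projF_apply (m : ℕ) (x : EuclideanSpace ℝ (Fin (m + 1))) (i : Fin m) :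
    projF m x i = x i.castSucc := rfl

lemma tube_upper (m : ℕ) (hm : 1 ≤ m) {δ : ℝ} (hδ : 0 < δ) {ε : ℝ≥0∞} (hε : ε ≠ 0) :
    ∃ (T : ℕ → Set (EuclideanSpace ℝ (Fin (m + 1)))) (r : ℕ → ℝ),
      (∀ i, IsTube (T i) (r i)) ∧ squareTube m δ ⊆ ⋃ i, T i ∧
      ∑' i, unitBallVolume m * ENNReal.ofReal (r i ^ m) ≤
        ENNReal.ofReal ((2 * δ) ^ m) + ε := by
  classical
  set cube : Set (EuclideanSpace ℝ (Fin m)) := {z | ∀ i, z i ∈ Icc (-δ) δ} with hcube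
  have hε2 : ε / 2 ≠ 0 := by
    simp [ENNReal.div_eq_zero_iff, hε]
  obtain ⟨t, rad, tcount, tsub, hrad, hcov, hsum⟩ :=
    Besicovitch.exists_closedBall_covering_tsum_measure_le
      (volume : Measure (EuclideanSpace ℝ (Fin m))) hε2 (fun _ => Ioo 0 1) cube
      (fun x _ δ' hδ' => ⟨min (1 / 2) (δ' / 2),
        ⟨lt_min (by norm_num) (by positivity),
          lt_of_le_of_lt (min_le_left _ _) (by norm_num)⟩,
        ⟨lt_min (by norm_num) (by positivity),
          lt_of_le_of_lt (min_le_right _ _) (by linarith)⟩⟩)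
  obtain ⟨ε', hε'pos, hε'sum⟩ := ENNReal.exists_pos_sum_of_countable hε2 ℕ
  haveI : Encodable ↥t := tcount.toEncodable
  have hc := fun n : ℕ => exists_small_radius hm (unitBallVolume m) (unitBallVolume_ne_top m)
    (ε' n : ℝ≥0∞) (by exact_mod_cast (hε'pos n).ne')
  choose c hc0 hcb using hc
  set r : ℕ → ℝ := fun n => (Encodable.decode₂ ↥t n).elim (c n) (fun a => rad ↑a) with hrdef
  set T : ℕ → Set (EuclideanSpace ℝ (Fin (m + 1))) := fun n =>
    (Encodable.decode₂ ↥t n).elim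
      (Metric.cthickening (c n) {y | ∃ s : ℝ, y = vpt m 0 + s • vdir m})
      (fun a => Metric.cthickening (rad ↑a) {y | ∃ s : ℝ, y = vpt m ↑a + s • vdir m})
    with hTdef
  refine ⟨T, r, ?_, ?_, ?_⟩
  · intro n
    rcases h : Encodable.decode₂ ↥t n with _ | a
    · refine ⟨by simp [hrdef, h, hc0 n], vpt m 0, vdir m, vdir_ne m, by simp [hTdef, hrdef, h]⟩
    · refine ⟨by simp [hrdef, h, (hrad ↑a a.2).1], vpt m ↑a, vdir m, vdir_ne m,
        by simp [hTdef, hrdef, h]⟩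
  · intro x hx
    have hz : projF m x ∈ cube := fun i => hx i
    obtain ⟨a, ha, hball⟩ := Set.mem_iUnion₂.mp (hcov hz)
    refine Set.mem_iUnion.mpr ⟨Encodable.encode (⟨a, ha⟩ : ↥t), ?_⟩
    have hdec : Encodable.decode₂ ↥t (Encodable.encode (⟨a, ha⟩ : ↥t)) = some ⟨a, ha⟩ :=
      Encodable.decode₂_encode _
    simp only [hTdef, hdec, Option.elim]
    exact mem_vert_tube (mem_closedBall.mp hball)
  · set G : ℕ → ℝ≥0∞ := fun n => (Encodable.decode₂ ↥t n).elim 0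
      (fun a => volume (Metric.closedBall (↑a : EuclideanSpace ℝ (Fin m)) (rad ↑a))) with hG
    set H : ℕ → ℝ≥0∞ := fun n => (Encodable.decode₂ ↥t n).elim (ε' n : ℝ≥0∞) (fun _ => 0)
      with hH
    have hpt : ∀ n, unitBallVolume m * ENNReal.ofReal (r n ^ m) ≤ G n + H n := by
      intro n
      rcases h : Encodable.decode₂ ↥t n with _ | a
      · simp only [hG, hH, hrdef, h, Option.elim, zero_add]
        exact hcb n
      · simp only [hG, hH, hrdef, h, Option.elim, add_zero]
        rw [volume_closedBall_eucl m _ (hrad ↑a a.2).1.le, mul_comm]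
    have hGsum : ∑' n, G n = ∑' a : ↥t,
        volume (Metric.closedBall (↑a : EuclideanSpace ℝ (Fin m)) (rad ↑a)) := by
      have hsupp : Function.support G ⊆ Set.range (Encodable.encode : ↥t → ℕ) := by
        intro n hn
        by_contra hnr
        have hnone : Encodable.decode₂ ↥t n = none := by
          by_contra hne
          exact hnr (Encodable.decode₂_ne_none_iff.mp hne)
        exact hn (by simp [hG, hnone])
      have := Function.Injective.tsum_eq (Encodable.encode_injective (α := ↥t)) hsupp
      rw [← this]
      apply tsum_congr
      intro a
      simp [hG, Encodable.decode₂_encode]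
    have hHsum : ∑' n, H n ≤ ε / 2 := by
      refine le_trans (ENNReal.tsum_le_tsum fun n => ?_) hε'sum.le
      rcases h : Encodable.decode₂ ↥t n with _ | a <;> simp [hH, h]
    calc ∑' i, unitBallVolume m * ENNReal.ofReal (r i ^ m) ≤ ∑' n, (G n + H n) :=
          ENNReal.tsum_le_tsum hpt
      _ = ∑' n, G n + ∑' n, H n := ENNReal.tsum_add
      _ ≤ (volume cube + ε / 2) + ε / 2 := add_le_add (hGsum ▸ hsum) hHsum
      _ = volume cube + ε := by rw [add_assoc, ENNReal.add_halves]
      _ = ENNReal.ofReal ((2 * δ) ^ m) + ε := by rw [hcube, volume_cubeF m hδ.le]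


/-- `μ([-δ, δ]^{n-1} × ℝ) = (2δ)^{n-1}`. -/
theorem tubeMeasure_squareTube (m : ℕ) (hm : 1 ≤ m) (δ : ℝ) (hδ : 0 < δ) :
    tubeMeasure (m + 1) (squareTube m δ) = ENNReal.ofReal ((2 * δ) ^ m) := by
  apply le_antisymm
  · rw [tubeMeasure]
    apply ENNReal.le_of_forall_pos_le_add
    intro ε hε _
    obtain ⟨T, r, htube, hcov, hsum⟩ :=
      tube_upper m hm hδ (ε := (ε : ℝ≥0∞)) (ENNReal.coe_ne_zero.mpr hε.ne')
    refine le_trans ?_ hsum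
    exact iInf_le_of_le T (iInf_le_of_le r (iInf_le_of_le htube
      (iInf_le_of_le hcov (le_of_eq rfl))))
  · rw [tubeMeasure]
    exact le_iInf fun T => le_iInf fun r => le_iInf fun htube => le_iInf fun hcov =>
      tube_lower m hδ T r htube hcov
end
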